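/- Let T(x) := sSup {T ∈ ℝ : T^3 − x·T − 2 = 0} denote the greatest real root of the cubic T^3 − x·T − 2. Then T(x) + 2/x = O(1/x²) as x → −∞, i.e., the function x ↦ T(x) + 2/x is big-O of x ↦ 1/x² along the filter atBot on ℝ. -/
import Mathlib

lemma aux_mono {x : ℝ} (hx : x ≤ -2) : StrictMono fun T : ℝ => T ^ 3 - x * T - 2 := by
  intro a b hab
  dsimp only
  nlinarith [sq_nonneg (a + b), sq_nonneg (a - b), sq_nonneg a, sq_nonneg b]

/-- With `T(x) := sSup {T | T^3 - x T - 2 = 0}` the greatest real root,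
`T(x) + 2/x = O(1/x²)` as `x → -∞`. -/
theorem statement7 :
    (fun x : ℝ => sSup {T : ℝ | T ^ 3 - x * T - 2 = 0} + 2 / x)
      =O[Filter.atBot] (fun x : ℝ => 1 / x ^ 2) := by
  rw [Asymptotics.isBigO_iff]
  refine ⟨8, ?_⟩
  filter_upwards [Filter.eventually_le_atBot (-2 : ℝ)] with x hx
  have hx0 : x < 0 := by linarith
  have hxne : x ≠ 0 := ne_of_lt hx0
  set f : ℝ → ℝ := fun T : ℝ => T ^ 3 - x * T - 2 with hf
  have hmono : StrictMono f := aux_mono hx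
  -- existence of a root in [0,1]
  have hcont : ContinuousOn f (Set.Icc 0 1) := by
    fun_prop
  have h0 : f 0 = -2 := by simp [hf]
  have h1 : f 1 = -1 - x := by simp [hf]; ring
  have hmem : (0 : ℝ) ∈ Set.Icc (f 0) (f 1) := by
    constructor <;> simp [h0, h1] <;> linarith
  obtain ⟨t, htI, htroot⟩ := intermediate_value_Icc (by norm_num : (0:ℝ) ≤ 1) hcont hmem
  have ht0 : 0 ≤ t := htI.1
  have ht1 : t ≤ 1 := htI.2
  have heq : t ^ 3 - x * t - 2 = 0 := htroot
  -- the root set is {t}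
  have hset : {T : ℝ | T ^ 3 - x * T - 2 = 0} = {t} := by
    ext T
    simp only [Set.mem_setOf_eq, Set.mem_singleton_iff]
    constructor
    · intro hT
      have : f T = f t := by simp [hf, hT, heq]
      exact hmono.injective this
    · rintro rfl; exact heq
  rw [hset, csSup_singleton]
  -- now bound |t + 2/x| ≤ 8 * |1/x^2|
  have harw : t + 2 / x = t ^ 3 / x := by
    field_simp
    linarith [heq]
  rw [harw]
  have habs1 : |t ^ 3 / x| = t ^ 3 / (-x) := by
    rw [abs_div, abs_of_nonneg (pow_nonneg ht0 3), abs_of_neg hx0]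
  have habs2 : |1 / x ^ 2| = 1 / x ^ 2 := by
    rw [abs_of_nonneg]; positivity
  rw [Real.norm_eq_abs, Real.norm_eq_abs, habs1, habs2]
  have hxpos : (0:ℝ) < -x := by linarith
  have hx2 : (0:ℝ) < x ^ 2 := by positivity
  rw [mul_one_div, div_le_div_iff₀ hxpos hx2]
  have htle : t * (-x) ≤ 2 := by nlinarith [pow_nonneg ht0 3]
  have h3 : (t * (-x)) ^ 3 ≤ 2 ^ 3 :=
    pow_le_pow_left₀ (mul_nonneg ht0 (le_of_lt hxpos)) htle 3
  nlinarith [h3, mul_nonneg (mul_nonneg (pow_nonneg ht0 3) (sq_nonneg x)) hxpos.le,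
    mul_nonneg (pow_nonneg ht0 3) (sq_nonneg x)]
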